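/- arXiv:1407.5325 — 4 statements merged into one kernel-verified Lean document; each statement's English description precedes it below -/
import Mathlib

section
/- For each n ∈ ℕ, the set of bounded operators on a Hilbert space H of rank at most n is closed in the strong operator topology. -/
open scoped InnerProductSpace

/-- Gram determinant vanishes iff the family is linearly dependent. -/
lemma gram_det_eq_zero_iff {H : Type*} [NormedAddCommGroup H] [InnerProductSpace ℂ H]
    {m : Type*} [Fintype m] [DecidableEq m] (f : m → H) :
    (Matrix.of fun i j => (⟪f i, f j⟫_ℂ)).det = 0 ↔ ¬ LinearIndependent ℂ f := by
  rw [← Matrix.exists_mulVec_eq_zero_iff, Fintype.not_linearIndependent_iff]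
  constructor
  · rintro ⟨v, hv0, hv⟩
    refine ⟨v, ?_, ?_⟩
    · have h1 : ∀ i, ⟪f i, ∑ j, v j • f j⟫_ℂ = 0 := by
        intro i
        have := congr_fun hv i
        simpa [Matrix.mulVec, dotProduct, inner_sum, inner_smul_right, mul_comm] using this
      have h2 : ⟪∑ i, v i • f i, ∑ j, v j • f j⟫_ℂ = 0 := by
        rw [sum_inner]
        simp [inner_smul_left, h1]
      exact inner_self_eq_zero.mp h2
    · exact Function.ne_iff.mp hv0
  · rintro ⟨g, hg, i, hi⟩
    refine ⟨g, Function.ne_iff.mpr ⟨i, hi⟩, ?_⟩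
    funext k
    simp only [Matrix.mulVec, dotProduct, Matrix.of_apply, Pi.zero_apply]
    calc ∑ j, ⟪f k, f j⟫_ℂ * g j = ⟪f k, ∑ j, g j • f j⟫_ℂ := by
          rw [inner_sum]; simp [inner_smul_right, mul_comm]
      _ = 0 := by rw [hg, inner_zero_right]

/-- An operator has rank at most `n` iff the images of any `n + 1` vectors are
linearly dependent. -/
lemma rank_le_iff_forall {H : Type*} [NormedAddCommGroup H] [InnerProductSpace ℂ H]
    (n : ℕ) (T : H →L[ℂ] H) :
    Module.rank ℂ (LinearMap.range (T : H →ₗ[ℂ] H)) ≤ n ↔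
      ∀ v : Fin (n + 1) → H, ¬ LinearIndependent ℂ (fun i => T (v i)) := by
  rw [← not_iff_not]
  push_neg
  rw [← Order.succ_le_iff, ← Cardinal.nat_succ, natCast_le_rank_iff]
  constructor
  · rintro ⟨f, hf⟩
    choose v hv using fun i => (f i).2
    refine ⟨v, ?_⟩
    have : (fun i => T (v i)) = fun i => ((LinearMap.range (T : H →ₗ[ℂ] H)).subtype (f i)) := by
      funext i; simp [← hv i]
    rw [this]
    exact hf.map' _ (Submodule.ker_subtype _)
  · rintro ⟨v, hv⟩
    refine ⟨fun i => ⟨T (v i), LinearMap.mem_range_self _ _⟩, ?_⟩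
    exact (LinearIndependent.of_comp (LinearMap.range (T : H →ₗ[ℂ] H)).subtype (by exact hv))

/-- The strong operator topology on `H →L[ℂ] H`: the topology of pointwise
(norm) convergence, i.e. the topology induced by the inclusion into `H → H`
with the product topology. -/
noncomputable def sot (H : Type*) [NormedAddCommGroup H] [InnerProductSpace ℂ H] :
    TopologicalSpace (H →L[ℂ] H) :=
  TopologicalSpace.induced (fun T => (T : H → H)) Pi.topologicalSpace

theorem stmt_10 {H : Type*} [NormedAddCommGroup H] [InnerProductSpace ℂ H]
    [CompleteSpace H] (n : ℕ) :
    @IsClosed (H →L[ℂ] H) (sot H)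
      {T : H →L[ℂ] H | Module.rank ℂ (LinearMap.range (T : H →ₗ[ℂ] H)) ≤ n} := by
  letI : TopologicalSpace (H →L[ℂ] H) := sot H
  have key : {T : H →L[ℂ] H | Module.rank ℂ (LinearMap.range (T : H →ₗ[ℂ] H)) ≤ n} =
      ⋂ v : Fin (n + 1) → H,
        {T : H →L[ℂ] H | (Matrix.of fun i j => (⟪T (v i), T (v j)⟫_ℂ)).det = 0} := by
    ext T
    simp only [Set.mem_iInter, Set.mem_setOf_eq, rank_le_iff_forall n T]
    exact forall_congr' fun v => (gram_det_eq_zero_iff fun i => T (v i)).symm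
  rw [key]
  refine isClosed_iInter fun v => ?_
  have hcoe : Continuous fun T : H →L[ℂ] H => (T : H → H) := continuous_induced_dom
  have hc : Continuous fun T : H →L[ℂ] H =>
      (Matrix.of fun i j => (⟪T (v i), T (v j)⟫_ℂ)).det := by
    refine Continuous.matrix_det (continuous_matrix fun i j => ?_)
    exact Continuous.inner ((continuous_apply (v i)).comp hcoe)
      ((continuous_apply (v j)).comp hcoe)
  exact isClosed_eq hc continuous_const
end

section
/- Let P, Q be orthogonal projections on a Hilbert space H. The following are equivalent: (i) there exist finite-dimensional subspaces U, V of H with ran(P) ⊆ ran(Q) + U and ran(Q) ⊆ ran(P) + V; (ii) there exist finite-dimensional subspaces W ⊆ ran(P)^⊥ and Y ⊆ ran(Q)^⊥ with ran(P) + W = ran(Q) + Y; (iii) P - Q is a finite rank operator. -/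
open ContinuousLinearMap Submodule

private lemma adj_range_fd_14 {H : Type*} [NormedAddCommGroup H] [InnerProductSpace ℂ H]
    [CompleteSpace H] (T : H →L[ℂ] H) [FiniteDimensional ℂ (LinearMap.range (T : H →ₗ[ℂ] H))] :
    FiniteDimensional ℂ (LinearMap.range ((ContinuousLinearMap.adjoint T : H →L[ℂ] H) : H →ₗ[ℂ] H)) := by
  have hle : LinearMap.range ((ContinuousLinearMap.adjoint T : H →L[ℂ] H) : H →ₗ[ℂ] H) ≤
      (LinearMap.range (T : H →ₗ[ℂ] H)).map ((ContinuousLinearMap.adjoint T : H →L[ℂ] H) : H →ₗ[ℂ] H) := by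
    rintro _ ⟨x, rfl⟩
    obtain ⟨u, hu, v, hv, rfl⟩ := (LinearMap.range (T : H →ₗ[ℂ] H)).exists_add_mem_mem_orthogonal x
    have hv0 : ContinuousLinearMap.adjoint T v = 0 := by
      rw [← inner_self_eq_zero (𝕜 := ℂ), ContinuousLinearMap.adjoint_inner_left]
      exact (Submodule.mem_orthogonal' _ v).mp hv _ (LinearMap.mem_range_self _ _)
    rw [map_add, ContinuousLinearMap.coe_coe, hv0, add_zero]
    exact Submodule.mem_map_of_mem hu
  exact Submodule.finiteDimensional_of_le hle

theorem stmt_14 {H : Type*} [NormedAddCommGroup H] [InnerProductSpace ℂ H]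
    [CompleteSpace H] (P Q : H →L[ℂ] H)
    (hP : P.comp P = P) (hP' : ContinuousLinearMap.adjoint P = P)
    (hQ : Q.comp Q = Q) (hQ' : ContinuousLinearMap.adjoint Q = Q) :
    List.TFAE
      [ (∃ U V : Submodule ℂ H, FiniteDimensional ℂ U ∧ FiniteDimensional ℂ V ∧
          LinearMap.range (P : H →ₗ[ℂ] H) ≤ LinearMap.range (Q : H →ₗ[ℂ] H) ⊔ U ∧
          LinearMap.range (Q : H →ₗ[ℂ] H) ≤ LinearMap.range (P : H →ₗ[ℂ] H) ⊔ V),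
        (∃ W Y : Submodule ℂ H, FiniteDimensional ℂ W ∧ FiniteDimensional ℂ Y ∧
          W ≤ (LinearMap.range (P : H →ₗ[ℂ] H))ᗮ ∧ Y ≤ (LinearMap.range (Q : H →ₗ[ℂ] H))ᗮ ∧
          LinearMap.range (P : H →ₗ[ℂ] H) ⊔ W = LinearMap.range (Q : H →ₗ[ℂ] H) ⊔ Y),
        FiniteDimensional ℂ (LinearMap.range ((P - Q : H →L[ℂ] H) : H →ₗ[ℂ] H)) ] := by
  have hPP : ∀ x, P (P x) = P x := fun x => congrFun (congrArg (⇑) hP) x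
  have hQQ : ∀ x, Q (Q x) = Q x := fun x => congrFun (congrArg (⇑) hQ) x
  tfae_have 1 → 3
  | ⟨U, V, hU, hV, hPU, hQV⟩ => by
    set A : H →L[ℂ] H := (1 - Q).comp P with hAdef
    set B : H →L[ℂ] H := (1 - P).comp Q with hBdef
    -- range A is finite dimensional
    have hA : LinearMap.range (A : H →ₗ[ℂ] H) ≤ U.map ((1 - Q : H →L[ℂ] H) : H →ₗ[ℂ] H) := by
      rintro _ ⟨x, rfl⟩
      obtain ⟨q, hq, u, hu, hsum⟩ := Submodule.mem_sup.mp (hPU (LinearMap.mem_range_self (P : H →ₗ[ℂ] H) x))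
      obtain ⟨z, rfl⟩ := hq
      simp only [ContinuousLinearMap.coe_coe] at hsum ⊢
      have : A x = (1 - Q) u := by
        simp only [hAdef, ContinuousLinearMap.comp_apply, ← hsum]
        simp only [ContinuousLinearMap.sub_apply, ContinuousLinearMap.one_apply, map_add, hQQ]
        abel
      rw [this]
      exact Submodule.mem_map_of_mem hu
    have hB : LinearMap.range (B : H →ₗ[ℂ] H) ≤ V.map ((1 - P : H →L[ℂ] H) : H →ₗ[ℂ] H) := by
      rintro _ ⟨x, rfl⟩
      obtain ⟨p, hp, v, hv, hsum⟩ := Submodule.mem_sup.mp (hQV (LinearMap.mem_range_self (Q : H →ₗ[ℂ] H) x))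
      obtain ⟨z, rfl⟩ := hp
      simp only [ContinuousLinearMap.coe_coe] at hsum ⊢
      have : B x = (1 - P) v := by
        simp only [hBdef, ContinuousLinearMap.comp_apply, ← hsum]
        simp only [ContinuousLinearMap.sub_apply, ContinuousLinearMap.one_apply, map_add, hPP]
        abel
      rw [this]
      exact Submodule.mem_map_of_mem hv
    haveI hAfd : FiniteDimensional ℂ (LinearMap.range (A : H →ₗ[ℂ] H)) := Submodule.finiteDimensional_of_le hA
    haveI hBfd : FiniteDimensional ℂ (LinearMap.range (B : H →ₗ[ℂ] H)) := Submodule.finiteDimensional_of_le hB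
    haveI hBadj : FiniteDimensional ℂ (LinearMap.range ((ContinuousLinearMap.adjoint B : H →L[ℂ] H) : H →ₗ[ℂ] H)) :=
      adj_range_fd_14 B
    -- P - Q = A - adjoint B
    have hadjB : ContinuousLinearMap.adjoint B = Q.comp (1 - P) := by
      rw [hBdef, ContinuousLinearMap.adjoint_comp, hQ', map_sub, hP']
      congr 1
      simp [ContinuousLinearMap.one_def, ContinuousLinearMap.adjoint_id]
    have key : LinearMap.range ((P - Q : H →L[ℂ] H) : H →ₗ[ℂ] H) ≤
        LinearMap.range (A : H →ₗ[ℂ] H) ⊔ LinearMap.range ((ContinuousLinearMap.adjoint B : H →L[ℂ] H) : H →ₗ[ℂ] H) := by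
      rintro _ ⟨x, rfl⟩
      have hx : (P - Q) x = A x - (ContinuousLinearMap.adjoint B) x := by
        rw [hadjB]
        simp only [hAdef, ContinuousLinearMap.comp_apply, ContinuousLinearMap.sub_apply,
          ContinuousLinearMap.one_apply, map_sub]
        abel
      rw [ContinuousLinearMap.coe_coe, hx]
      exact sub_mem (Submodule.mem_sup_left (LinearMap.mem_range_self _ x))
        (Submodule.mem_sup_right (LinearMap.mem_range_self _ x))
    exact Submodule.finiteDimensional_of_le key
  tfae_have 3 → 2
  | hF => by
    haveI := hF
    set F : Submodule ℂ H := LinearMap.range ((P - Q : H →L[ℂ] H) : H →ₗ[ℂ] H) with hFdef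
    refine ⟨F.map ((1 - P : H →L[ℂ] H) : H →ₗ[ℂ] H),
      F.map ((1 - Q : H →L[ℂ] H) : H →ₗ[ℂ] H), inferInstance, inferInstance, ?_, ?_, ?_⟩
    · rintro _ ⟨f, hf, rfl⟩
      rw [Submodule.mem_orthogonal]
      rintro _ ⟨y, rfl⟩
      have : (inner ℂ (P y) (((1 - P : H →L[ℂ] H) : H →ₗ[ℂ] H) f) : ℂ)
          = inner ℂ y (P ((1 - P : H →L[ℂ] H) f)) := by
        conv_lhs => rw [← hP']
        rw [ContinuousLinearMap.adjoint_inner_left, hP']; rfl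
      rw [ContinuousLinearMap.coe_coe, this]
      have h0 : P ((1 - P : H →L[ℂ] H) f) = 0 := by
        simp [ContinuousLinearMap.sub_apply, ContinuousLinearMap.one_apply, map_sub, hPP]
      rw [h0, inner_zero_right]
    · rintro _ ⟨f, hf, rfl⟩
      rw [Submodule.mem_orthogonal]
      rintro _ ⟨y, rfl⟩
      have : (inner ℂ (Q y) (((1 - Q : H →L[ℂ] H) : H →ₗ[ℂ] H) f) : ℂ)
          = inner ℂ y (Q ((1 - Q : H →L[ℂ] H) f)) := by
        conv_lhs => rw [← hQ']
        rw [ContinuousLinearMap.adjoint_inner_left, hQ']; rfl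
      rw [ContinuousLinearMap.coe_coe, this]
      have h0 : Q ((1 - Q : H →L[ℂ] H) f) = 0 := by
        simp [ContinuousLinearMap.sub_apply, ContinuousLinearMap.one_apply, map_sub, hQQ]
      rw [h0, inner_zero_right]
    · have key : ∀ R : H →L[ℂ] H,
          LinearMap.range (R : H →ₗ[ℂ] H) ⊔ F.map ((1 - R : H →L[ℂ] H) : H →ₗ[ℂ] H)
            = LinearMap.range (R : H →ₗ[ℂ] H) ⊔ F := by
        intro R
        apply le_antisymm
        · refine sup_le le_sup_left ?_
          rintro _ ⟨f, hf, rfl⟩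
          have hfe : ((1 - R : H →L[ℂ] H) : H →ₗ[ℂ] H) f = f - R f := rfl
          rw [hfe]
          exact sub_mem (Submodule.mem_sup_right hf)
            (Submodule.mem_sup_left (LinearMap.mem_range_self _ f))
        · refine sup_le le_sup_left ?_
          intro f hf
          have : f = R f + ((1 - R : H →L[ℂ] H) : H →ₗ[ℂ] H) f := by
            simp [ContinuousLinearMap.sub_apply, ContinuousLinearMap.one_apply]
          rw [this]
          exact add_mem (Submodule.mem_sup_left (LinearMap.mem_range_self _ f))
            (Submodule.mem_sup_right (Submodule.mem_map_of_mem hf))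
      have hPQF : LinearMap.range (P : H →ₗ[ℂ] H) ⊔ F = LinearMap.range (Q : H →ₗ[ℂ] H) ⊔ F := by
        apply le_antisymm
        · refine sup_le ?_ le_sup_right
          rintro _ ⟨x, rfl⟩
          have : P x = Q (P x) + (P - Q) (P x) := by
            simp only [ContinuousLinearMap.sub_apply, hPP]
            abel
          rw [ContinuousLinearMap.coe_coe, this]
          exact add_mem (Submodule.mem_sup_left (LinearMap.mem_range_self _ _))
            (Submodule.mem_sup_right (LinearMap.mem_range_self _ _))
        · refine sup_le ?_ le_sup_right
          rintro _ ⟨x, rfl⟩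
          have : Q x = P (Q x) - (P - Q) (Q x) := by
            simp only [ContinuousLinearMap.sub_apply, hQQ]
            abel
          rw [ContinuousLinearMap.coe_coe, this]
          exact sub_mem (Submodule.mem_sup_left (LinearMap.mem_range_self _ _))
            (Submodule.mem_sup_right (LinearMap.mem_range_self _ _))
      rw [key P, key Q, hPQF]
  tfae_have 2 → 1
  | ⟨W, Y, hW, hY, hWle, hYle, hEq⟩ => by
    refine ⟨Y, W, hY, hW, ?_, ?_⟩
    · rw [← hEq]; exact le_sup_left
    · rw [hEq]; exact le_sup_left
  tfae_finish
end

section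
/- Let H be a Hilbert space with orthonormal basis (e_n) and P_α the projection onto the closed span of {e_{2n} + α_n e_{2n+1}} for α ∈ [0,1]^ℕ. If α, β ∈ [0,1]^ℕ and P_α - P_β is a compact operator, then α_n - β_n → 0. -/
/-- The orthogonal projection onto the closed linear span of
`{e (2n) + α n • e (2n+1) : n ∈ ℕ}`, viewed as an operator `H →L[ℂ] H`. -/
noncomputable def Pproj {H : Type*} [NormedAddCommGroup H] [InnerProductSpace ℂ H]
    [CompleteSpace H] (e : HilbertBasis ℕ ℂ H) (α : ℕ → ℝ) : H →L[ℂ] H :=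
  let S : Submodule ℂ H :=
    Submodule.span ℂ (Set.range fun n => e (2 * n) + ((α n : ℝ) : ℂ) • e (2 * n + 1))
  haveI : CompleteSpace S.topologicalClosure := S.isClosed_topologicalClosure.completeSpace_coe
  S.topologicalClosure.subtypeL.comp (Submodule.orthogonalProjection S.topologicalClosure)

open Filter

lemma Pproj_apply_even {H : Type*} [NormedAddCommGroup H] [InnerProductSpace ℂ H]
    [CompleteSpace H] (e : HilbertBasis ℕ ℂ H) (α : ℕ → ℝ) (m : ℕ) :
    Pproj e α (e (2 * m)) =
      ((1 + (α m : ℂ) ^ 2)⁻¹) • (e (2 * m) + ((α m : ℝ) : ℂ) • e (2 * m + 1)) := by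
  set S : Submodule ℂ H :=
    Submodule.span ℂ (Set.range fun n => e (2 * n) + ((α n : ℝ) : ℂ) • e (2 * n + 1)) with hS
  haveI : CompleteSpace S.topologicalClosure := S.isClosed_topologicalClosure.completeSpace_coe
  have hne : (1 + (α m : ℂ) ^ 2) ≠ 0 := by
    have : ((1 + (α m) ^ 2 : ℝ) : ℂ) ≠ 0 := by
      exact_mod_cast ne_of_gt (by positivity : (0:ℝ) < 1 + (α m)^2)
    push_cast at this
    exact this
  have hon : ∀ i j, (inner ℂ (e i) (e j) : ℂ) = if i = j then 1 else 0 :=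
    orthonormal_iff_ite.mp e.orthonormal
  have hP : Pproj e α (e (2 * m)) =
      (Submodule.orthogonalProjection S.topologicalClosure (e (2 * m)) : H) := rfl
  rw [hP]
  rw [← Submodule.starProjection_apply]
  apply Submodule.eq_starProjection_of_mem_orthogonal
  · exact Submodule.le_topologicalClosure S
      (Submodule.smul_mem _ _ (Submodule.subset_span ⟨m, rfl⟩))
  · have hle : Sᗮ ≤ S.topologicalClosureᗮ := by
      rw [← Submodule.orthogonal_orthogonal_eq_closure]
      exact Submodule.le_orthogonal_orthogonal _
    apply hle
    rw [Submodule.mem_orthogonal]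
    intro u hu
    rw [hS] at hu
    induction hu using Submodule.span_induction with
    | mem x hx =>
        obtain ⟨k, rfl⟩ := hx
        by_cases hk : k = m
        · subst hk
          have h1 : 2 * k ≠ 2 * k + 1 := by omega
          have h2 : 2 * k + 1 ≠ 2 * k := by omega
          simp only [inner_sub_right, inner_add_left, inner_smul_left, inner_smul_right,
            inner_add_right, hon, Complex.conj_ofReal, if_pos rfl, if_neg h1, if_neg h2]
          field_simp
          ring
        · have h1 : 2 * k ≠ 2 * m := by omega
          have h2 : 2 * k ≠ 2 * m + 1 := by omega
          have h3 : 2 * k + 1 ≠ 2 * m := by omega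
          have h4 : 2 * k + 1 ≠ 2 * m + 1 := by omega
          simp only [inner_sub_right, inner_add_left, inner_smul_left, inner_smul_right,
            inner_add_right, hon, Complex.conj_ofReal, if_neg h1, if_neg h2, if_neg h3,
            if_neg h4]
          ring
    | zero => simp
    | add x y _ _ hx hy => rw [inner_add_left, hx, hy, add_zero]
    | smul c x _ hx => rw [inner_smul_left, hx, mul_zero]

lemma key_bound {H : Type*} [NormedAddCommGroup H] [InnerProductSpace ℂ H]
    [CompleteSpace H] (e : HilbertBasis ℕ ℂ H) (α β : ℕ → ℝ)
    (hα : ∀ n, α n ∈ Set.Icc (0:ℝ) 1) (hβ : ∀ n, β n ∈ Set.Icc (0:ℝ) 1) (m : ℕ) :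
    |α m - β m| ≤ 8 * ‖(Pproj e α - Pproj e β) (e (2 * m))‖ := by
  obtain ⟨ha0, ha1⟩ := hα m
  obtain ⟨hb0, hb1⟩ := hβ m
  set a := α m
  set b := β m
  set N := ‖(Pproj e α - Pproj e β) (e (2 * m))‖ with hN
  have hNn : 0 ≤ N := norm_nonneg _
  have hpa : (0:ℝ) < 1 + a^2 := by positivity
  have hpb : (0:ℝ) < 1 + b^2 := by positivity
  set c₁ : ℝ := (1+a^2)⁻¹ - (1+b^2)⁻¹ with hc₁
  set c₂ : ℝ := a*(1+a^2)⁻¹ - b*(1+b^2)⁻¹ with hc₂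
  have hon : ∀ i j, (inner ℂ (e i) (e j) : ℂ) = if i = j then 1 else 0 :=
    orthonormal_iff_ite.mp e.orthonormal
  have hT : (Pproj e α - Pproj e β) (e (2 * m)) =
      ((c₁ : ℝ) : ℂ) • e (2 * m) + ((c₂ : ℝ) : ℂ) • e (2 * m + 1) := by
    rw [ContinuousLinearMap.sub_apply, Pproj_apply_even, Pproj_apply_even, hc₁, hc₂]
    have hca : ((1:ℝ) + a^2 : ℝ) ≠ 0 := ne_of_gt hpa
    have hcb : ((1:ℝ) + b^2 : ℝ) ≠ 0 := ne_of_gt hpb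
    push_cast
    module
  have hne : (2 * m : ℕ) ≠ 2 * m + 1 := by omega
  have hi1 : (inner ℂ (e (2*m)) ((Pproj e α - Pproj e β) (e (2 * m))) : ℂ) = ((c₁:ℝ):ℂ) := by
    rw [hT, inner_add_right, inner_smul_right, inner_smul_right, hon, hon]
    simp [hne]
  have hi2 : (inner ℂ (e (2*m+1)) ((Pproj e α - Pproj e β) (e (2 * m))) : ℂ) = ((c₂:ℝ):ℂ) := by
    rw [hT, inner_add_right, inner_smul_right, inner_smul_right, hon, hon]
    simp [Ne.symm hne]
  have hb1' : ∀ j (c : ℝ), (inner ℂ (e j) ((Pproj e α - Pproj e β) (e (2 * m))) : ℂ) = ((c:ℝ):ℂ) →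
      |c| ≤ N := by
    intro j c hc
    have := norm_inner_le_norm (𝕜 := ℂ) (e j) ((Pproj e α - Pproj e β) (e (2 * m)))
    rw [hc, e.orthonormal.1 j, one_mul] at this
    simpa [hN] using this
  have h1 : |c₁| ≤ N := hb1' _ _ hi1
  have h2 : |c₂| ≤ N := hb1' _ _ hi2
  -- arithmetic
  have ha2 : a^2 ≤ 1 := by nlinarith
  have hb2 : b^2 ≤ 1 := by nlinarith
  have hD : (1+a^2)*(1+b^2) ≤ 4 := by nlinarith
  have hDpos : (0:ℝ) < (1+a^2)*(1+b^2) := by positivity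
  have e1 : c₁ * ((1+a^2)*(1+b^2)) = b^2 - a^2 := by
    rw [hc₁]; field_simp; ring
  have e2 : c₂ * ((1+a^2)*(1+b^2)) = (a-b)*(1-a*b) := by
    rw [hc₂]; field_simp; ring
  have k1 : |b^2 - a^2| ≤ 4 * N := by
    rw [← e1, abs_mul, abs_of_pos hDpos]
    calc |c₁| * ((1+a^2)*(1+b^2)) ≤ N * 4 := by
          apply mul_le_mul h1 hD (le_of_lt hDpos) hNn
      _ = 4 * N := by ring
  have k2 : |(a-b)*(1-a*b)| ≤ 4 * N := by
    rw [← e2, abs_mul, abs_of_pos hDpos]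
    calc |c₂| * ((1+a^2)*(1+b^2)) ≤ N * 4 := by
          apply mul_le_mul h2 hD (le_of_lt hDpos) hNn
      _ = 4 * N := by ring
  by_cases hab : (1:ℝ)/2 ≤ a + b
  · have heq : b^2 - a^2 = -((a-b)*(a+b)) := by ring
    rw [heq, abs_neg, abs_mul, abs_of_nonneg (by linarith : (0:ℝ) ≤ a+b)] at k1
    have hh := mul_le_mul_of_nonneg_left hab (abs_nonneg (a-b))
    linarith
  · push_neg at hab
    have hab' : (1:ℝ)/2 ≤ 1 - a*b := by nlinarith
    rw [abs_mul, abs_of_nonneg (by linarith : (0:ℝ) ≤ 1-a*b)] at k2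
    have hh := mul_le_mul_of_nonneg_left hab' (abs_nonneg (a-b))
    linarith

lemma repr_tendsto_zero {H : Type*} [NormedAddCommGroup H] [InnerProductSpace ℂ H]
    [CompleteSpace H] (e : HilbertBasis ℕ ℂ H) (w : H) :
    Tendsto (fun n => (inner ℂ w (e n) : ℂ)) atTop (nhds 0) := by
  have hmem : Memℓp (fun n => e.repr w n) 2 := (e.repr w).2
  have hsum : Summable (fun n => ‖e.repr w n‖ ^ (2:ℕ)) := by
    have := hmem.summable (p := 2) (by norm_num)
    have h22 : (2:ENNReal).toReal = (2:ℝ) := by norm_num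
    rw [h22] at this
    convert this using 2 with n
    rw [← Real.rpow_natCast]
    norm_num
  have h0 : Tendsto (fun n => ‖e.repr w n‖ ^ (2:ℕ)) atTop (nhds 0) :=
    hsum.tendsto_atTop_zero
  have h1 : Tendsto (fun n => ‖e.repr w n‖) atTop (nhds 0) := by
    have h2 := (Real.continuous_sqrt.tendsto 0).comp h0
    simp only [Function.comp_def, Real.sqrt_zero] at h2
    convert h2 using 2 with n
    exact (Real.sqrt_sq (norm_nonneg _)).symm
  rw [tendsto_zero_iff_norm_tendsto_zero]
  convert h1 using 2 with n
  rw [show (inner ℂ w (e n) : ℂ) = starRingEnd ℂ (inner ℂ (e n) w) from (inner_conj_symm _ _).symm]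
  rw [RingHomIsometric.norm_map]
  exact congrArg norm (e.repr_apply_apply w n).symm

theorem stmt_17 {H : Type*} [NormedAddCommGroup H] [InnerProductSpace ℂ H]
    [CompleteSpace H] (e : HilbertBasis ℕ ℂ H)
    (α β : ℕ → ℝ) (hα : ∀ n, α n ∈ Set.Icc (0:ℝ) 1) (hβ : ∀ n, β n ∈ Set.Icc (0:ℝ) 1)
    (h : IsCompactOperator (Pproj e α - Pproj e β)) :
    Tendsto (fun n => α n - β n) atTop (nhds 0) := by
  set T : H →L[ℂ] H := Pproj e α - Pproj e β with hTdef
  -- Step 1: T (e (2m)) → 0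
  have hT0 : Tendsto (fun m => T (e (2 * m))) atTop (nhds 0) := by
    obtain ⟨K, hK, hKmem⟩ := h
    obtain ⟨r, hr, hball⟩ := Metric.mem_nhds_iff.mp hKmem
    set c : ℂ := ((r / 2 : ℝ) : ℂ) with hc
    have hcn : ‖c‖ = r / 2 := by
      rw [hc, Complex.norm_real, Real.norm_eq_abs, abs_of_pos (by linarith)]
    have hc0 : c ≠ 0 := by
      intro h0
      rw [h0, norm_zero] at hcn
      linarith
    apply tendsto_of_subseq_tendsto
    intro ns hns
    have hmem : ∀ k, c • T (e (2 * ns k)) ∈ K := by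
      intro k
      have h1 : c • e (2 * ns k) ∈ Metric.ball (0:H) r := by
        rw [Metric.mem_ball, dist_zero_right, norm_smul, e.orthonormal.1, mul_one, hcn]
        linarith
      have := hball h1
      simpa [map_smul] using this
    obtain ⟨y, hyK, φ, hφ, hlim⟩ := hK.tendsto_subseq hmem
    have hidx : Tendsto (fun k => 2 * ns (φ k)) atTop atTop := by
      apply tendsto_atTop_mono (fun k => Nat.le_mul_of_pos_left _ (by norm_num))
      exact hns.comp hφ.tendsto_atTop
    -- y = 0
    have hy : y = 0 := by
      have hy' : ∀ j, (inner ℂ (e j) y : ℂ) = 0 := by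
        intro j
        set A := ContinuousLinearMap.adjoint T with hA
        have hw := repr_tendsto_zero e (A (e j))
        have hw2 : Tendsto (fun k => (inner ℂ (A (e j)) (e (2 * ns (φ k))) : ℂ)) atTop (nhds 0) :=
          hw.comp hidx
        have hlim2 : Tendsto (fun k => (inner ℂ (e j) (c • T (e (2 * ns (φ k)))) : ℂ)) atTop
            (nhds (inner ℂ (e j) y)) := by
          exact (tendsto_const_nhds (x := e j)).inner hlim
        have heq : ∀ k, (inner ℂ (e j) (c • T (e (2 * ns (φ k)))) : ℂ) =
            c * inner ℂ (A (e j)) (e (2 * ns (φ k))) := by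
          intro k
          rw [inner_smul_right]
          congr 1
          rw [hA, ContinuousLinearMap.adjoint_inner_left]
        simp only [heq] at hlim2
        have hlim3 : Tendsto (fun k => c * (inner ℂ (A (e j)) (e (2 * ns (φ k))) : ℂ)) atTop
            (nhds 0) := by
          have := hw2.const_mul c
          simpa using this
        exact (tendsto_nhds_unique hlim2 hlim3)
      have hrepr : e.repr y = 0 := by
        ext j
        simp [e.repr_apply_apply, hy' j]
      have := congrArg e.repr.symm hrepr
      simpa using this
    rw [hy] at hlim
    refine ⟨φ, ?_⟩
    have hlim2 : Tendsto (fun k => c⁻¹ • (c • T (e (2 * ns (φ k))))) atTop (nhds (c⁻¹ • (0:H))) :=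
      hlim.const_smul _
    simpa [smul_smul, inv_mul_cancel₀ hc0] using hlim2
  -- Step 2: squeeze
  have hTn : Tendsto (fun m => 8 * ‖T (e (2 * m))‖) atTop (nhds 0) := by
    have := (tendsto_zero_iff_norm_tendsto_zero.mp hT0).const_mul (8:ℝ)
    simpa using this
  apply squeeze_zero_norm _ hTn
  intro n
  simpa [hTdef] using key_bound e α β hα hβ n
end

section
/- The set of projections of infinite rank and infinite corank is a dense G_δ subset of the space P(H) of all projections on H with the strong operator topology. -/
set_option maxHeartbeats 1000000
set_option synthInstance.maxHeartbeats 400000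

open scoped InnerProductSpace

section Aux

variable {H : Type*} [NormedAddCommGroup H] [InnerProductSpace ℂ H]

private lemma aux_det_zero {m : ℕ} (v w : Fin m → H) (c : Fin m → ℂ) (hc : c ≠ 0)
    (hsum : ∑ j, c j • v j = 0) :
    (Matrix.of fun i j => (⟪w i, v j⟫_ℂ)).det = 0 := by
  rw [← Matrix.exists_mulVec_eq_zero_iff]
  refine ⟨c, hc, ?_⟩
  ext i
  simp only [Matrix.mulVec, Matrix.of_apply, dotProduct, Pi.zero_apply]
  calc ∑ j, (⟪w i, v j⟫_ℂ) * c j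
      = ⟪w i, ∑ j, c j • v j⟫_ℂ := by
        rw [inner_sum]; exact Finset.sum_congr rfl fun j _ => by rw [inner_smul_right]; ring
    _ = 0 := by rw [hsum, inner_zero_right]

private lemma aux_gram_ne_zero {m : ℕ} {u : Fin m → H} (hu : LinearIndependent ℂ u) :
    (Matrix.of fun i j => (⟪u i, u j⟫_ℂ)).det ≠ 0 := by
  intro h
  obtain ⟨c, hc, hMc⟩ := Matrix.exists_mulVec_eq_zero_iff.mpr h
  have hui : ∀ i, (⟪u i, ∑ j, c j • u j⟫_ℂ) = 0 := by
    intro i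
    have h2 := congrFun hMc i
    simpa [Matrix.mulVec, dotProduct, inner_sum, inner_smul_right, mul_comm] using h2
  have hs : (∑ j, c j • u j) = 0 := by
    have h3 : (⟪∑ i, c i • u i, ∑ j, c j • u j⟫_ℂ) = 0 := by
      rw [sum_inner]
      exact Finset.sum_eq_zero fun i _ => by rw [inner_smul_left, hui i, mul_zero]
    exact inner_self_eq_zero.mp h3
  exact hc (funext (Fintype.linearIndependent_iff.mp hu c hs))

private lemma aux_char (T : H →L[ℂ] H) (hT : ∀ x, T (T x) = T x) :
    FiniteDimensional ℂ (LinearMap.range (T : H →ₗ[ℂ] H)) ↔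
      ∃ n : ℕ, ∀ v w : Fin (n + 1) → H,
        (Matrix.of fun i j => (⟪w i, T (v j)⟫_ℂ)).det = 0 := by
  constructor
  · intro hfd
    refine ⟨Module.finrank ℂ (LinearMap.range (T : H →ₗ[ℂ] H)), fun v w => ?_⟩
    have hdep : ¬ LinearIndependent ℂ fun j => T (v j) := by
      intro hind
      set u : Fin (Module.finrank ℂ (LinearMap.range (T : H →ₗ[ℂ] H)) + 1) → LinearMap.range (T : H →ₗ[ℂ] H) :=
        fun j => ⟨T (v j), LinearMap.mem_range_self _ _⟩ with hu
      have hui : LinearIndependent ℂ u := by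
        apply hind.of_comp (LinearMap.range (T : H →ₗ[ℂ] H)).subtype
      have hcard := hui.fintype_card_le_finrank
      simp [Fintype.card_fin] at hcard
    obtain ⟨c, hc0, i, hci⟩ := Fintype.not_linearIndependent_iff.mp hdep
    exact aux_det_zero _ _ c (fun h => hci (congrFun h i)) hc0
  · rintro ⟨n, hn⟩
    by_contra hinf
    have hrank : (↑(n + 1) : Cardinal) ≤ Module.rank ℂ (LinearMap.range (T : H →ₗ[ℂ] H)) := by
      have := (not_iff_not.mpr (Module.rank_lt_aleph0_iff (R := ℂ)
        (M := ↥(LinearMap.range (T : H →ₗ[ℂ] H))))).mpr hinf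
      exact le_trans (le_of_lt (Cardinal.nat_lt_aleph0 _)) (not_lt.mp this)
    obtain ⟨f, hf⟩ := exists_linearIndependent_of_le_rank hrank
    have hg : LinearIndependent ℂ fun j => ((f j : H)) :=
      hf.map' (LinearMap.range (T : H →ₗ[ℂ] H)).subtype (Submodule.ker_subtype _)
    have hTg : ∀ j, T ((f j : H)) = (f j : H) := by
      intro j
      obtain ⟨x, hx⟩ := (f j).2
      rw [← hx]; exact hT x
    have := hn (fun j => (f j : H)) (fun j => (f j : H))
    rw [show (Matrix.of fun i j => (⟪(f i : H), T ((f j : H))⟫_ℂ))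
        = Matrix.of fun i j => (⟪(f i : H), (f j : H)⟫_ℂ) by
      ext i j; rw [Matrix.of_apply, Matrix.of_apply, hTg]] at this
    exact aux_gram_ne_zero hg this

private lemma aux_exists_proj [CompleteSpace H] (hinf : ¬ FiniteDimensional ℂ H)
    (P : H →L[ℂ] H) (hP2 : P.comp P = P) (hPa : ContinuousLinearMap.adjoint P = P)
    (I : Finset H) :
    ∃ Q : H →L[ℂ] H, Q.comp Q = Q ∧ ContinuousLinearMap.adjoint Q = Q ∧
      (∀ x ∈ I, Q x = P x) ∧ ¬ FiniteDimensional ℂ (LinearMap.range (Q : H →ₗ[ℂ] H)) ∧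
      ¬ FiniteDimensional ℂ (LinearMap.ker (Q : H →ₗ[ℂ] H)) := by
  have hPidem : ∀ x, P (P x) = P x := fun x => by
    conv_rhs => rw [← hP2]
    rfl
  have hsym : ∀ a b : H, (⟪P a, b⟫_ℂ) = ⟪a, P b⟫_ℂ := fun a b => by
    conv_lhs => rw [← hPa]
    exact ContinuousLinearMap.adjoint_inner_left P b a
  set W : Submodule ℂ H := Submodule.span ℂ ((I : Set H) ∪ (⇑P '' ↑I)) with hW
  haveI : FiniteDimensional ℂ W :=
    FiniteDimensional.span_of_finite ℂ (I.finite_toSet.union (I.finite_toSet.image _))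
  have hWP : ∀ x ∈ W, P x ∈ W := by
    intro x hx
    induction hx using Submodule.span_induction with
    | mem y hy =>
      rcases hy with hy | ⟨z, hz, rfl⟩
      · exact Submodule.subset_span (Or.inr ⟨y, hy, rfl⟩)
      · rw [hPidem]; exact Submodule.subset_span (Or.inr ⟨z, hz, rfl⟩)
    | zero => simp
    | add a b _ _ ha hb => rw [map_add]; exact W.add_mem ha hb
    | smul c a _ ha => rw [map_smul]; exact W.smul_mem c ha
  have hKinf : ¬ FiniteDimensional ℂ ↥Wᗮ := by
    intro hfd
    have htop : W ⊔ Wᗮ = ⊤ := Submodule.sup_orthogonal_of_hasOrthogonalProjection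
    have : FiniteDimensional ℂ ↥(W ⊔ Wᗮ) := inferInstance
    rw [htop] at this
    exact hinf (Module.Finite.equiv (Submodule.topEquiv))
  haveI : CompleteSpace ↥Wᗮ := (Submodule.isClosed_orthogonal W).completeSpace_coe
  obtain ⟨s, b, hb⟩ := exists_hilbertBasis ℂ ↥Wᗮ
  have hsinf : s.Infinite := by
    by_contra hfin
    rw [Set.not_infinite] at hfin
    have hrfin : (Set.range ⇑b).Finite := by rw [hb, Subtype.range_coe]; exact hfin
    haveI : FiniteDimensional ℂ (Submodule.span ℂ (Set.range ⇑b)) :=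
      FiniteDimensional.span_of_finite ℂ hrfin
    have hcl : IsClosed ((Submodule.span ℂ (Set.range ⇑b) : Submodule ℂ ↥Wᗮ) : Set ↥Wᗮ) :=
      Submodule.closed_of_finiteDimensional _
    have hdense := b.dense_span
    have htop2 : (Submodule.span ℂ (Set.range ⇑b) : Submodule ℂ ↥Wᗮ) = ⊤ := by
      rw [← hdense, hcl.submodule_topologicalClosure_eq]
    have : FiniteDimensional ℂ ↥(⊤ : Submodule ℂ ↥Wᗮ) := htop2 ▸ inferInstance
    exact hKinf (Module.Finite.equiv (Submodule.topEquiv))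
  set emb := hsinf.natEmbedding with hemb
  set f : ℕ → H := fun n => ((b (emb n) : ↥Wᗮ) : H) with hf
  have hfK : ∀ n, f n ∈ Wᗮ := fun n => (b (emb n) : ↥Wᗮ).2
  have hforth : Orthonormal ℂ f := by
    have h2 : Orthonormal ℂ (⇑b ∘ ⇑emb) := b.orthonormal.comp _ emb.injective
    constructor
    · intro n
      exact h2.1 n
    · intro i j hij
      show (⟪((b (emb i) : ↥Wᗮ) : H), ((b (emb j) : ↥Wᗮ) : H)⟫_ℂ) = 0
      rw [← Submodule.coe_inner]
      exact h2.2 hij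
  set Sev : Submodule ℂ H := Submodule.span ℂ (Set.range fun n => f (2 * n)) with hSev
  set V : Submodule ℂ H := Sev.topologicalClosure with hV
  have hSevK : Sev ≤ Wᗮ := by
    rw [hSev, Submodule.span_le]
    rintro _ ⟨n, rfl⟩
    exact hfK _
  have hVK : V ≤ Wᗮ :=
    Sev.topologicalClosure_minimal hSevK (Submodule.isClosed_orthogonal W)
  haveI : CompleteSpace ↥V := (Submodule.isClosed_topologicalClosure Sev).completeSpace_coe
  set PW : Submodule ℂ H := Submodule.map (P : H →ₗ[ℂ] H) W with hPW
  haveI : FiniteDimensional ℂ ↥PW := Module.Finite.map W (P : H →ₗ[ℂ] H)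
  have hPWle : PW ≤ W := by
    rintro _ ⟨x, hx, rfl⟩
    exact hWP x hx
  have hVPWbot : V ≤ PWᗮ := le_trans hVK (Submodule.orthogonal_le hPWle)
  have hWVbot : W ≤ Vᗮ :=
    le_trans (Submodule.le_orthogonal_orthogonal W) (Submodule.orthogonal_le hVK)
  -- the two projections
  set Q1 : H →L[ℂ] H := PW.subtypeL ∘L PW.orthogonalProjectionOnto with hQ1
  set Q2 : H →L[ℂ] H := V.subtypeL ∘L V.orthogonalProjectionOnto with hQ2
  set Q : H →L[ℂ] H := Q1 + Q2 with hQ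
  have hQ1mem : ∀ x, Q1 x ∈ PW := fun x => (PW.orthogonalProjectionOnto x).2
  have hQ2mem : ∀ x, Q2 x ∈ V := fun x => (V.orthogonalProjectionOnto x).2
  have hQ1self : ∀ x ∈ PW, Q1 x = x := fun x hx => by
    show ((PW.orthogonalProjectionOnto x : ↥PW) : H) = x
    exact Submodule.starProjection_eq_self_iff.mpr hx
  have hQ2self : ∀ x ∈ V, Q2 x = x := fun x hx => by
    show ((V.orthogonalProjectionOnto x : ↥V) : H) = x
    exact Submodule.starProjection_eq_self_iff.mpr hx
  have hQ1zero : ∀ x ∈ PWᗮ, Q1 x = 0 := fun x hx => by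
    show ((PW.orthogonalProjectionOnto x : ↥PW) : H) = 0
    rw [Submodule.orthogonalProjectionOnto_apply_of_mem_orthogonal hx]
    rfl
  have hQ2zero : ∀ x ∈ Vᗮ, Q2 x = 0 := fun x hx => by
    show ((V.orthogonalProjectionOnto x : ↥V) : H) = 0
    rw [Submodule.orthogonalProjectionOnto_apply_of_mem_orthogonal hx]
    rfl
  have hQapp : ∀ x, Q x = Q1 x + Q2 x := fun x => rfl
  have hidem : Q.comp Q = Q := by
    ext x
    show Q (Q1 x + Q2 x) = Q x
    rw [hQapp, map_add Q1, map_add Q2, hQ1self _ (hQ1mem x),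
      hQ1zero _ (hVPWbot (hQ2mem x)), hQ2self _ (hQ2mem x),
      hQ2zero _ (hWVbot (hPWle (hQ1mem x))), hQapp]
    abel
  have hadj : ContinuousLinearMap.adjoint Q = Q := by
    have h1 := isSelfAdjoint_starProjection PW
    have h2 := isSelfAdjoint_starProjection V
    exact ContinuousLinearMap.isSelfAdjoint_iff'.mp (h1.add h2)
  refine ⟨Q, hidem, hadj, ?_, ?_, ?_⟩
  · -- agreement on I
    intro x hx
    have hxW : x ∈ W := Submodule.subset_span (Or.inl hx)
    have hQ2x : Q2 x = 0 := hQ2zero _ (hWVbot hxW)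
    have hQ1x : Q1 x = P x := by
      show ((PW.orthogonalProjectionOnto x : ↥PW) : H) = P x
      apply Submodule.eq_starProjection_of_mem_of_inner_eq_zero
      · exact Submodule.mem_map_of_mem hxW
      · rintro _ ⟨y, hy, rfl⟩
        have : P (x - P x) = 0 := by rw [map_sub, hPidem, sub_self]
        calc (⟪x - P x, P y⟫_ℂ) = ⟪P (x - P x), y⟫_ℂ := (hsym _ _).symm
          _ = 0 := by rw [this, inner_zero_left]
    rw [hQapp, hQ1x, hQ2x, add_zero]
  · -- infinite rank
    intro hfd
    have hmem : ∀ n, f (2 * n) ∈ LinearMap.range (Q : H →ₗ[ℂ] H) := by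
      intro n
      have hfV : f (2 * n) ∈ V :=
        Sev.le_topologicalClosure (Submodule.subset_span ⟨n, rfl⟩)
      refine ⟨f (2 * n), ?_⟩
      show Q (f (2 * n)) = f (2 * n)
      rw [hQapp, hQ1zero _ (hVPWbot hfV), hQ2self _ hfV, zero_add]
    set g : ℕ → ↥(LinearMap.range (Q : H →ₗ[ℂ] H)) := fun n => ⟨f (2 * n), hmem n⟩ with hg
    have hgind : LinearIndependent ℂ g := by
      apply LinearIndependent.of_comp (LinearMap.range (Q : H →ₗ[ℂ] H)).subtype
      exact (hforth.comp (fun n => 2 * n) (fun a b h => by dsimp only at h; omega)).linearIndependent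
    exact Module.Finite.not_linearIndependent_of_infinite g hgind
  · -- infinite corank
    intro hfd
    have hVbot : Vᗮ = Sevᗮ := by
      haveI : CompleteSpace ↥Sevᗮ := (Submodule.isClosed_orthogonal Sev).completeSpace_coe
      rw [hV, ← Submodule.orthogonal_orthogonal_eq_closure, Submodule.orthogonal_orthogonal]
    have hodd : ∀ n, f (2 * n + 1) ∈ Vᗮ := by
      intro n
      rw [hVbot, Submodule.mem_orthogonal]
      intro u hu
      induction hu using Submodule.span_induction with
      | mem y hy =>
        obtain ⟨m, rfl⟩ := hy
        exact hforth.2 (by omega)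
      | zero => rw [inner_zero_left]
      | add a c _ _ ha hc => rw [inner_add_left, ha, hc, add_zero]
      | smul t a _ ha => rw [inner_smul_left, ha, mul_zero]
    have hmem : ∀ n, f (2 * n + 1) ∈ LinearMap.ker (Q : H →ₗ[ℂ] H) := by
      intro n
      have hfW : f (2 * n + 1) ∈ PWᗮ := Submodule.orthogonal_le hPWle (hfK _)
      rw [LinearMap.mem_ker]
      show Q _ = 0
      rw [hQapp, hQ1zero _ hfW, hQ2zero _ (hodd n), add_zero]
    set g : ℕ → ↥(LinearMap.ker (Q : H →ₗ[ℂ] H)) := fun n => ⟨f (2 * n + 1), hmem n⟩ with hg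
    have hgind : LinearIndependent ℂ g := by
      apply LinearIndependent.of_comp (LinearMap.ker (Q : H →ₗ[ℂ] H)).subtype
      exact (hforth.comp (fun n => 2 * n + 1) (fun a b h => by dsimp only at h; omega)).linearIndependent
    exact Module.Finite.not_linearIndependent_of_infinite g hgind

end Aux

theorem stmt_19 {H : Type*} [NormedAddCommGroup H] [InnerProductSpace ℂ H]
    [CompleteSpace H] (e : HilbertBasis ℕ ℂ H) :
    letI t : TopologicalSpace
        {P : H →L[ℂ] H // P.comp P = P ∧ ContinuousLinearMap.adjoint P = P} :=
      TopologicalSpace.induced Subtype.val (sot H)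
    @Dense _ t
        {P : {P : H →L[ℂ] H // P.comp P = P ∧ ContinuousLinearMap.adjoint P = P} |
          ¬ FiniteDimensional ℂ (LinearMap.range (P.1 : H →ₗ[ℂ] H)) ∧
            ¬ FiniteDimensional ℂ (LinearMap.ker (P.1 : H →ₗ[ℂ] H))} ∧
      @IsGδ _ t
        {P : {P : H →L[ℂ] H // P.comp P = P ∧ ContinuousLinearMap.adjoint P = P} |
          ¬ FiniteDimensional ℂ (LinearMap.range (P.1 : H →ₗ[ℂ] H)) ∧
            ¬ FiniteDimensional ℂ (LinearMap.ker (P.1 : H →ₗ[ℂ] H))} := by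
  letI : TopologicalSpace (H →L[ℂ] H) := sot H
  letI t : TopologicalSpace
      {P : H →L[ℂ] H // P.comp P = P ∧ ContinuousLinearMap.adjoint P = P} :=
    TopologicalSpace.induced Subtype.val (sot H)
  show @Dense _ t _ ∧ @IsGδ _ t _
  have hinf : ¬ FiniteDimensional ℂ H := fun _ =>
    Module.Finite.not_linearIndependent_of_infinite _ e.orthonormal.linearIndependent
  have hcont : ∀ x : H,
      Continuous fun P : {P : H →L[ℂ] H // P.comp P = P ∧
        ContinuousLinearMap.adjoint P = P} => P.1 x := by
    intro x
    have h1 : Continuous (Subtype.val : {P : H →L[ℂ] H // P.comp P = P ∧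
        ContinuousLinearMap.adjoint P = P} → (H →L[ℂ] H)) := continuous_induced_dom
    have h2 : Continuous (fun T : H →L[ℂ] H => (T : H → H)) := continuous_induced_dom
    exact (continuous_apply x).comp (h2.comp h1)
  have hchar1 : ∀ P : {P : H →L[ℂ] H // P.comp P = P ∧ ContinuousLinearMap.adjoint P = P},
      FiniteDimensional ℂ (LinearMap.range (P.1 : H →ₗ[ℂ] H)) ↔
      ∃ n : ℕ, ∀ v w : Fin (n + 1) → H,
        (Matrix.of fun i j => (⟪w i, P.1 (v j)⟫_ℂ)).det = 0 :=
    fun P => aux_char P.1 (fun x => by rw [← ContinuousLinearMap.comp_apply, P.2.1])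
  have hchar2 : ∀ P : {P : H →L[ℂ] H // P.comp P = P ∧ ContinuousLinearMap.adjoint P = P},
      FiniteDimensional ℂ (LinearMap.ker (P.1 : H →ₗ[ℂ] H)) ↔
      ∃ n : ℕ, ∀ v w : Fin (n + 1) → H,
        (Matrix.of fun i j => (⟪w i, v j - P.1 (v j)⟫_ℂ)).det = 0 := by
    intro P
    have hPidem : ∀ x, P.1 (P.1 x) = P.1 x := fun x => by rw [← ContinuousLinearMap.comp_apply, P.2.1]
    set T' := ContinuousLinearMap.id ℂ H - P.1 with hT'
    have hT'app : ∀ x, T' x = x - P.1 x := fun x => rfl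
    have hT'idem : ∀ x, T' (T' x) = T' x := fun x => by
      rw [hT'app, hT'app, map_sub, hPidem, sub_self, sub_zero]
    have hkr : LinearMap.ker (P.1 : H →ₗ[ℂ] H) = LinearMap.range (T' : H →ₗ[ℂ] H) := by
      ext x
      rw [LinearMap.mem_ker, LinearMap.mem_range]
      constructor
      · intro hx
        exact ⟨x, by show T' x = x; rw [hT'app, show P.1 x = 0 from hx, sub_zero]⟩
      · rintro ⟨y, rfl⟩
        show P.1 (T' y) = 0
        rw [hT'app, map_sub, hPidem, sub_self]
    rw [hkr]
    have hch := aux_char T' hT'idem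
    have hmat : ∀ (n : ℕ) (v w : Fin (n + 1) → H),
        (Matrix.of fun i j => (⟪w i, T' (v j)⟫_ℂ))
          = Matrix.of fun i j => (⟪w i, v j - P.1 (v j)⟫_ℂ) := by
      intro n v w
      ext i j
      rw [Matrix.of_apply, Matrix.of_apply, hT'app]
    constructor
    · intro h
      obtain ⟨n, hn⟩ := hch.mp h
      exact ⟨n, fun v w => by rw [← hmat]; exact hn v w⟩
    · rintro ⟨n, hn⟩
      exact hch.mpr ⟨n, fun v w => by rw [hmat]; exact hn v w⟩
  constructor
  · -- Density
    rw [dense_iff_inter_open]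
    rintro U hU ⟨P, hP⟩
    obtain ⟨V, hV, rfl⟩ := isOpen_induced_iff.mp hU
    obtain ⟨O, hO, rfl⟩ := isOpen_induced_iff.mp hV
    obtain ⟨I, u, hIu, hbox⟩ := isOpen_pi_iff.mp hO _ hP
    obtain ⟨Q, hQ2, hQa, hQI, hQr, hQk⟩ := aux_exists_proj hinf P.1 P.2.1 P.2.2 I
    refine ⟨⟨Q, hQ2, hQa⟩, ?_, hQr, hQk⟩
    show (⇑Q) ∈ O
    apply hbox
    rw [Set.mem_pi]
    intro a ha
    rw [Finset.mem_coe] at ha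
    rw [hQI a ha]
    exact (hIu a ha).2
  · -- Gδ
    have hCclosed : ∀ n : ℕ, IsClosed {P : {P : H →L[ℂ] H // P.comp P = P ∧
        ContinuousLinearMap.adjoint P = P} | ∀ v w : Fin (n + 1) → H,
        (Matrix.of fun i j => (⟪w i, P.1 (v j)⟫_ℂ)).det = 0} := by
      intro n
      have heq : {P : {P : H →L[ℂ] H // P.comp P = P ∧
          ContinuousLinearMap.adjoint P = P} | ∀ v w : Fin (n + 1) → H,
          (Matrix.of fun i j => (⟪w i, P.1 (v j)⟫_ℂ)).det = 0}
          = ⋂ (v : Fin (n + 1) → H), ⋂ (w : Fin (n + 1) → H),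
            {P | (Matrix.of fun i j => (⟪w i, P.1 (v j)⟫_ℂ)).det = 0} := by
        ext P
        simp only [Set.mem_setOf_eq, Set.mem_iInter]
      rw [heq]
      refine isClosed_iInter fun v => isClosed_iInter fun w => isClosed_eq ?_ continuous_const
      exact Continuous.matrix_det (continuous_matrix fun i j =>
        continuous_const.inner (hcont (v j)))
    have hDclosed : ∀ n : ℕ, IsClosed {P : {P : H →L[ℂ] H // P.comp P = P ∧
        ContinuousLinearMap.adjoint P = P} | ∀ v w : Fin (n + 1) → H,
        (Matrix.of fun i j => (⟪w i, v j - P.1 (v j)⟫_ℂ)).det = 0} := by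
      intro n
      have heq : {P : {P : H →L[ℂ] H // P.comp P = P ∧
          ContinuousLinearMap.adjoint P = P} | ∀ v w : Fin (n + 1) → H,
          (Matrix.of fun i j => (⟪w i, v j - P.1 (v j)⟫_ℂ)).det = 0}
          = ⋂ (v : Fin (n + 1) → H), ⋂ (w : Fin (n + 1) → H),
            {P | (Matrix.of fun i j => (⟪w i, v j - P.1 (v j)⟫_ℂ)).det = 0} := by
        ext P
        simp only [Set.mem_setOf_eq, Set.mem_iInter]
      rw [heq]
      refine isClosed_iInter fun v => isClosed_iInter fun w => isClosed_eq ?_ continuous_const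
      exact Continuous.matrix_det (continuous_matrix fun i j =>
        continuous_const.inner (continuous_const.sub (hcont (v j))))
    have hSeq : {P : {P : H →L[ℂ] H // P.comp P = P ∧ ContinuousLinearMap.adjoint P = P} |
          ¬ FiniteDimensional ℂ (LinearMap.range (P.1 : H →ₗ[ℂ] H)) ∧
            ¬ FiniteDimensional ℂ (LinearMap.ker (P.1 : H →ₗ[ℂ] H))}
        = ⋂ n : ℕ,
          ({P : {P : H →L[ℂ] H // P.comp P = P ∧ ContinuousLinearMap.adjoint P = P} |
              ∀ v w : Fin (n + 1) → H,
                (Matrix.of fun i j => (⟪w i, P.1 (v j)⟫_ℂ)).det = 0} ∪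
            {P | ∀ v w : Fin (n + 1) → H,
                (Matrix.of fun i j => (⟪w i, v j - P.1 (v j)⟫_ℂ)).det = 0})ᶜ := by
      ext P
      simp only [Set.mem_setOf_eq, Set.mem_iInter, Set.mem_compl_iff, Set.mem_union, not_or]
      constructor
      · rintro ⟨h1, h2⟩ n
        exact ⟨fun hCn => h1 ((hchar1 P).mpr ⟨n, hCn⟩),
          fun hDn => h2 ((hchar2 P).mpr ⟨n, hDn⟩)⟩
      · intro h
        refine ⟨fun h1 => ?_, fun h2 => ?_⟩
        · obtain ⟨n, hn⟩ := (hchar1 P).mp h1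
          exact (h n).1 hn
        · obtain ⟨n, hn⟩ := (hchar2 P).mp h2
          exact (h n).2 hn
    rw [hSeq]
    exact IsGδ.iInter fun n =>
      (((hCclosed n).union (hDclosed n)).isOpen_compl).isGδ
end
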